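/- Let B, B' ∈ ℝ^{p×p} be invertible and A₁, A₁' ∈ ℝ^{p×p}, and let S = [B A₁], S' = [B' A₁'] ∈ ℝ^{p×2p}. Then the infimum over orthogonal Q ∈ ℝ^{p×p} and scalars c > 0 of ‖S' − c·Q·S‖²_F equals zero if and only if there exist an orthogonal matrix Q ∈ ℝ^{p×p} and c > 0 such that B' = c·Q·B and A₁' = c·Q·A₁. -/

import Mathlib

open Matrix Filter

/-- Squared Frobenius norm of a real `p × 2p` matrix, `‖M‖²_F = tr (M Mᵀ)`. -/
noncomputable def frobSq {p : ℕ} (M : Matrix (Fin p) (Fin p ⊕ Fin p) ℝ) : ℝ :=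
  Matrix.trace (M * Mᵀ)

private lemma frobSq_eq {p : ℕ} (M : Matrix (Fin p) (Fin p ⊕ Fin p) ℝ) :
    frobSq M = ∑ i, ∑ j, (M i j)^2 := by
  simp [frobSq, Matrix.trace, Matrix.mul_apply, Matrix.diag, sq]

private lemma frobSq_nonneg {p : ℕ} (M : Matrix (Fin p) (Fin p ⊕ Fin p) ℝ) : 0 ≤ frobSq M := by
  rw [frobSq_eq]; positivity

private lemma sq_entry_le_frobSq {p : ℕ} (M : Matrix (Fin p) (Fin p ⊕ Fin p) ℝ) (i : Fin p)
    (j : Fin p ⊕ Fin p) : (M i j)^2 ≤ frobSq M := by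
  rw [frobSq_eq]
  calc (M i j)^2 ≤ ∑ j', (M i j')^2 :=
        Finset.single_le_sum (f := fun j' => (M i j')^2) (fun _ _ => sq_nonneg _)
          (Finset.mem_univ j)
    _ ≤ ∑ i', ∑ j', (M i' j')^2 :=
        Finset.single_le_sum (f := fun i' => ∑ j', (M i' j')^2)
          (fun _ _ => Finset.sum_nonneg fun _ _ => sq_nonneg _) (Finset.mem_univ i)

private lemma tendsto_matrix_entry {m n : Type*} {X : ℕ → Matrix m n ℝ} {L : Matrix m n ℝ}
    (h : Tendsto X atTop (nhds L)) (i : m) (j : n) :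
    Tendsto (fun k => X k i j) atTop (nhds (L i j)) :=
  tendsto_pi_nhds.mp (tendsto_pi_nhds.mp h i) j

private lemma tendsto_matrix_of_entry {m n : Type*} {X : ℕ → Matrix m n ℝ} {L : Matrix m n ℝ}
    (h : ∀ i j, Tendsto (fun k => X k i j) atTop (nhds (L i j))) :
    Tendsto X atTop (nhds L) := by
  exact tendsto_pi_nhds.mpr fun i => tendsto_pi_nhds.mpr (h i)


/-- **The scale-free alignment discrepancy is equivalence-aware.**
For invertible `B, B'`, the infimum over orthogonal `Q` and `c > 0` of `‖S' − cQS‖²_F`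
is zero if and only if `B' = cQB` and `A₁' = cQA₁` for some orthogonal `Q` and `c > 0`,
i.e. exactly when the two structural VAR(1) models are scale-free observationally
equivalent. -/
theorem scale_free_alignment_discrepancy_zero_iff (p : ℕ)
    (B B' A₁ A₁' : Matrix (Fin p) (Fin p) ℝ)
    (hB : IsUnit B.det) (hB' : IsUnit B'.det)
    (S S' : Matrix (Fin p) (Fin p ⊕ Fin p) ℝ)
    (hS : S = Matrix.fromCols B A₁) (hS' : S' = Matrix.fromCols B' A₁') :
    sInf {x : ℝ | ∃ (Q : Matrix (Fin p) (Fin p) ℝ) (c : ℝ),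
        Qᵀ * Q = 1 ∧ 0 < c ∧ x = frobSq (S' - c • (Q * S))} = 0 ↔
    ∃ (Q : Matrix (Fin p) (Fin p) ℝ) (c : ℝ), Qᵀ * Q = 1 ∧ 0 < c ∧
      B' = c • (Q * B) ∧ A₁' = c • (Q * A₁) := by
  subst hS hS'
  set T : Set ℝ := {x : ℝ | ∃ (Q : Matrix (Fin p) (Fin p) ℝ) (c : ℝ),
      Qᵀ * Q = 1 ∧ 0 < c ∧
      x = frobSq (Matrix.fromCols B' A₁' - c • (Q * Matrix.fromCols B A₁))} with hT
  have hTne : T.Nonempty := ⟨_, 1, 1, by simp, one_pos, rfl⟩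
  have hTbdd : BddBelow T := by
    refine ⟨0, fun x hx => ?_⟩
    obtain ⟨Q, c, _, _, hx⟩ := hx
    exact hx ▸ frobSq_nonneg _
  constructor
  · -- hard direction
    intro h
    rcases Nat.eq_zero_or_pos p with hp | hp
    · subst hp
      exact ⟨1, 1, by ext i j; exact i.elim0, one_pos,
        by ext i j; exact i.elim0, by ext i j; exact i.elim0⟩
    haveI : Nonempty (Fin p) := ⟨⟨0, hp⟩⟩
    set i0 : Fin p := ⟨0, hp⟩
    have hmem : ∀ n : ℕ, ∃ (Q : Matrix (Fin p) (Fin p) ℝ) (c : ℝ), Qᵀ * Q = 1 ∧ 0 < c ∧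
        frobSq (Matrix.fromCols B' A₁' - c • (Q * Matrix.fromCols B A₁)) < 1/(n+1) := by
      intro n
      have hlt : sInf T < 1/(n+1) := by rw [h]; positivity
      obtain ⟨x, hxT, hxlt⟩ := exists_lt_of_csInf_lt hTne hlt
      obtain ⟨Q, c, h1, h2, h3⟩ := hxT
      exact ⟨Q, c, h1, h2, h3 ▸ hxlt⟩
    choose Qs cs hQs hcs hlt using hmem
    set N : ℕ → Matrix (Fin p) (Fin p) ℝ := fun n => cs n • Qs n with hN
    set D : ℕ → Matrix (Fin p) (Fin p ⊕ Fin p) ℝ :=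
      fun n => Matrix.fromCols B' A₁' - N n * Matrix.fromCols B A₁ with hD
    have hDfrob : ∀ n, frobSq (D n) < 1/(n+1) := fun n => by
      simpa [hD, hN, smul_mul_assoc] using hlt n
    have hD0 : Tendsto (fun n => frobSq (D n)) atTop (nhds 0) := by
      apply squeeze_zero (fun n => frobSq_nonneg _) (fun n => le_of_lt (hDfrob n))
      exact tendsto_one_div_add_atTop_nhds_zero_nat
    have hDentry : ∀ i j, Tendsto (fun n => D n i j) atTop (nhds 0) := by
      intro i j
      rw [tendsto_zero_iff_abs_tendsto_zero]
      have h1 : Tendsto (fun n => Real.sqrt (frobSq (D n))) atTop (nhds 0) := by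
        simpa [Function.comp_def] using (Real.continuous_sqrt.tendsto 0).comp hD0
      refine squeeze_zero (fun n => abs_nonneg _) (fun n => ?_) h1
      show |D n i j| ≤ _
      rw [← Real.sqrt_sq_eq_abs]
      exact Real.sqrt_le_sqrt (sq_entry_le_frobSq _ i j)
    have hNS : Tendsto (fun n => N n * Matrix.fromCols B A₁) atTop
        (nhds (Matrix.fromCols B' A₁')) := by
      refine tendsto_matrix_of_entry fun i j => ?_
      have := (hDentry i j).const_sub (Matrix.fromCols B' A₁' i j)
      simpa [hD, Matrix.sub_apply] using this
    have hNB : Tendsto (fun n => N n * B) atTop (nhds B') := by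
      refine tendsto_matrix_of_entry fun i j => ?_
      have := tendsto_matrix_entry hNS i (Sum.inl j)
      simpa [Matrix.mul_fromCols, Matrix.fromCols_apply_inl] using this
    have hNA : Tendsto (fun n => N n * A₁) atTop (nhds A₁') := by
      refine tendsto_matrix_of_entry fun i j => ?_
      have := tendsto_matrix_entry hNS i (Sum.inr j)
      simpa [Matrix.mul_fromCols, Matrix.fromCols_apply_inr] using this
    set M : Matrix (Fin p) (Fin p) ℝ := B' * B⁻¹ with hM
    have hNlim : Tendsto N atTop (nhds M) := by
      have hcont : Continuous (fun X : Matrix (Fin p) (Fin p) ℝ => X * B⁻¹) :=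
        continuous_id.matrix_mul continuous_const
      have := (hcont.tendsto B').comp hNB
      have heq : ∀ n, N n * B * B⁻¹ = N n := fun n =>
        Matrix.mul_nonsing_inv_cancel_right _ _ hB
      simpa [Function.comp_def, heq] using this
    have hMB : M * B = B' := Matrix.nonsing_inv_mul_cancel_right _ _ hB
    have hMA : M * A₁ = A₁' := by
      have hcont : Continuous (fun X : Matrix (Fin p) (Fin p) ℝ => X * A₁) :=
        continuous_id.matrix_mul continuous_const
      exact tendsto_nhds_unique (((hcont.tendsto M).comp hNlim)) hNA
    have hNtN : ∀ n, (N n)ᵀ * N n = (cs n)^2 • (1 : Matrix (Fin p) (Fin p) ℝ) := by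
      intro n
      rw [hN]
      simp only [Matrix.transpose_smul, smul_mul_assoc, Matrix.mul_smul, smul_smul, hQs n, sq]
    have hTt : Tendsto (fun n => (N n)ᵀ * N n) atTop (nhds (Mᵀ * M)) := by
      have hcont : Continuous (fun X : Matrix (Fin p) (Fin p) ℝ => Xᵀ * X) :=
        (continuous_id.matrix_transpose).matrix_mul continuous_id
      exact (hcont.tendsto M).comp hNlim
    set t : ℝ := (Mᵀ * M) i0 i0 with ht
    have hcs2 : Tendsto (fun n => (cs n)^2) atTop (nhds t) := by
      have := tendsto_matrix_entry hTt i0 i0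
      simpa [hNtN, Matrix.smul_apply, Matrix.one_apply_eq] using this
    have hMtM : Mᵀ * M = t • (1 : Matrix (Fin p) (Fin p) ℝ) := by
      have h2 : Tendsto (fun n => (cs n)^2 • (1 : Matrix (Fin p) (Fin p) ℝ)) atTop
          (nhds (t • 1)) := by
        have hcont : Continuous (fun s : ℝ => s • (1 : Matrix (Fin p) (Fin p) ℝ)) :=
          continuous_id.smul continuous_const
        exact (hcont.tendsto t).comp hcs2
      have h1 : Tendsto (fun n => (cs n)^2 • (1 : Matrix (Fin p) (Fin p) ℝ)) atTop
          (nhds (Mᵀ * M)) := by simpa [hNtN] using hTt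
      exact tendsto_nhds_unique h1 h2
    have ht0 : 0 ≤ t :=
      le_of_tendsto_of_tendsto' tendsto_const_nhds hcs2 (fun n => sq_nonneg _)
    have htne : t ≠ 0 := by
      intro h0
      have hMM0 : Mᵀ * M = 0 := by rw [hMtM, h0, zero_smul]
      have hM0 : M = 0 := by
        ext i j
        have h1 : ∑ k, (M k j)^2 = 0 := by
          have := congrFun (congrFun hMM0 j) j
          simpa [Matrix.mul_apply, Matrix.transpose_apply, sq] using this
        have := (Finset.sum_eq_zero_iff_of_nonneg (fun k _ => sq_nonneg (M k j))).mp h1 i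
          (Finset.mem_univ i)
        simpa using pow_eq_zero_iff (n := 2) (by norm_num) |>.mp (this)
      have hB'0 : B' = 0 := by rw [← hMB, hM0, Matrix.zero_mul]
      rw [hB'0, Matrix.det_zero] at hB'
      exact hB'.ne_zero rfl
    have htpos : 0 < t := lt_of_le_of_ne ht0 (Ne.symm htne)
    set c : ℝ := Real.sqrt t with hc
    have hcpos : 0 < c := Real.sqrt_pos.mpr htpos
    have hc2 : c^2 = t := Real.sq_sqrt ht0
    refine ⟨c⁻¹ • M, c, ?_, hcpos, ?_, ?_⟩
    · rw [Matrix.transpose_smul, smul_mul_assoc, Matrix.mul_smul, smul_smul, hMtM, smul_smul]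
      have : c⁻¹ * c⁻¹ * t = 1 := by
        rw [← hc2]; field_simp
      rw [this, one_smul]
    · rw [smul_mul_assoc, smul_smul, mul_inv_cancel₀ hcpos.ne', one_smul, hMB]
    · rw [smul_mul_assoc, smul_smul, mul_inv_cancel₀ hcpos.ne', one_smul, hMA]
  · -- easy direction
    rintro ⟨Q, c, hQ, hc, hBeq, hAeq⟩
    have heq : Matrix.fromCols B' A₁' - c • (Q * Matrix.fromCols B A₁) = 0 := by
      rw [Matrix.mul_fromCols]
      ext i j
      cases j <;>
        simp [Matrix.fromCols_apply_inl, Matrix.fromCols_apply_inr, hBeq, hAeq]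
    have h0T : (0 : ℝ) ∈ T := ⟨Q, c, hQ, hc, by rw [heq]; simp [frobSq]⟩
    refine le_antisymm (csInf_le hTbdd h0T) ?_
    refine le_csInf hTne fun x hx => ?_
    obtain ⟨Q', c', _, _, hx⟩ := hx
    exact hx ▸ frobSq_nonneg _
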